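/- Let (X, δ) be a diversity and let E(X) be the set of admissible functions on X. Define δ̂ on finite subsets of E(X) by δ̂(∅) = 0, δ̂({f}) = 0, and for k ≥ 2, δ̂({f₁, …, f_k}) = max over j ∈ {1, …, k} of the supremum, over all finite subsets A₁, …, A_k ⊆ X, of f_j(⋃_{i≠j} A_i) − Σ_{i≠j} f_i(A_i). Then (E(X), δ̂) is a diversity: δ̂ satisfies (D1) and (D2). -/

import Mathlib

open scoped Classical

/-- A diversity on `X`: a real-valued function on finite subsets satisfying
(D1) nonnegativity with `δ A = 0 ↔ |A| ≤ 1`, and (D2) the triangle inequality. -/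
structure Diversity (X : Type*) where
  δ : Finset X → ℝ
  nonneg : ∀ A : Finset X, 0 ≤ δ A
  eq_zero_iff : ∀ A : Finset X, δ A = 0 ↔ A.card ≤ 1
  triangle : ∀ A B C : Finset X, B.Nonempty → δ (A ∪ C) ≤ δ (A ∪ B) + δ (B ∪ C)

/-- An admissible function on a diversity (a one-point extension). -/
structure IsAdmissible {X : Type*} (D : Diversity X) (f : Finset X → ℝ) : Prop where
  empty : f ∅ = 0
  le : ∀ A : Finset X, D.δ A ≤ f A
  tri : ∀ A B C : Finset X, C.Nonempty → f (A ∪ B) ≤ f (A ∪ C) + D.δ (B ∪ C)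
  subadd : ∀ A B : Finset X, f (A ∪ B) ≤ f A + f B

/-- Restriction of a diversity to a subset. -/
noncomputable def Diversity.restrict {X : Type*} (D : Diversity X) (S : Set X) : Diversity S where
  δ A := D.δ (A.image Subtype.val)
  nonneg A := D.nonneg _
  eq_zero_iff A := by
    rw [D.eq_zero_iff, Finset.card_image_of_injective _ Subtype.val_injective]
  triangle A B C hB := by
    have h := D.triangle (A.image Subtype.val) (B.image Subtype.val) (C.image Subtype.val)
      (hB.image _)
    simpa [Finset.image_union] using h

/-- Separability of the induced metric `d a b = δ {a, b}`. -/
def Diversity.SeparableD {X : Type*} (D : Diversity X) : Prop :=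
  ∃ s : Set X, s.Countable ∧ ∀ x : X, ∀ ε : ℝ, 0 < ε → ∃ y ∈ s, D.δ {x, y} < ε

/-- Completeness of the induced metric `d a b = δ {a, b}`. -/
def Diversity.CompleteD {X : Type*} (D : Diversity X) : Prop :=
  ∀ u : ℕ → X, (∀ ε : ℝ, 0 < ε → ∃ N : ℕ, ∀ m ≥ N, ∀ n ≥ N, D.δ {u m, u n} < ε) →
    ∃ x : X, ∀ ε : ℝ, 0 < ε → ∃ N : ℕ, ∀ n ≥ N, D.δ {u n, x} < ε

/-- The diversity `δ̂` on (finite sets of) admissible functions. -/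
noncomputable def hatδ {X : Type*} (F : Finset (Finset X → ℝ)) : ℝ :=
  if F.card ≤ 1 then 0
  else sSup { r : ℝ | ∃ j ∈ F, ∃ A : (Finset X → ℝ) → Finset X,
    r = j ((F.erase j).biUnion A) - ∑ i ∈ F.erase j, i (A i) }

/-- The canonical maximal extension `f_S^X` of an admissible function on `S ⊆ X`. -/
noncomputable def extFun {X : Type*} (D : Diversity X) (S : Set X) (f : Finset S → ℝ)
    (A : Finset X) : ℝ :=
  sInf { r : ℝ | ∃ (B : Finset S) (As : S → Finset X),
    B.biUnion As = A ∧ r = f B + ∑ b ∈ B, D.δ (insert (b : X) (As b)) }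

/-- An admissible function is finitely supported if it is the canonical extension
of an admissible function on some finite nonempty `S ⊆ X`. -/
def FinitelySupported {X : Type*} (D : Diversity X) (f : Finset X → ℝ) : Prop :=
  ∃ S : Set X, S.Finite ∧ S.Nonempty ∧ ∃ g : Finset S → ℝ,
    IsAdmissible (D.restrict S) g ∧ f = extFun D S g

/-- The extension property for a diversity. -/
def Diversity.ExtensionProp {X : Type*} (D : Diversity X) : Prop :=
  ∀ F : Finset X, ∀ f : Finset ((F : Set X)) → ℝ,
    IsAdmissible (D.restrict (F : Set X)) f →
    ∃ x : X, ∀ A : Finset ((F : Set X)), D.δ (insert x (A.image Subtype.val)) = f A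

/-- The approximate extension property for a diversity. -/
def Diversity.ApproxExtensionProp {X : Type*} (D : Diversity X) : Prop :=
  ∀ F : Finset X, ∀ f : Finset ((F : Set X)) → ℝ,
    IsAdmissible (D.restrict (F : Set X)) f →
    ∀ ε : ℝ, 0 < ε →
      ∃ x : X, ∀ A : Finset ((F : Set X)), |D.δ (insert x (A.image Subtype.val)) - f A| ≤ ε

/-- Ultrahomogeneity: isomorphisms between finite subsets extend to automorphisms. -/
def Diversity.Ultrahomogeneous {X : Type*} (D : Diversity X) : Prop :=
  ∀ (A A' : Finset X) (φ : ((A : Set X)) → ((A' : Set X))), Function.Bijective φ →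
    (∀ B : Finset ((A : Set X)),
      D.δ (B.image (fun b => (φ b : X))) = D.δ (B.image Subtype.val)) →
    ∃ Φ : X → X, Function.Bijective Φ ∧ (∀ C : Finset X, D.δ (C.image Φ) = D.δ C) ∧
      ∀ a : ((A : Set X)), Φ a = (φ a : X)

section HatDiv

variable {X : Type*} {D : Diversity X}

/-- The supremum set appearing in `hatδ`. -/
def HatSet (F : Finset (Finset X → ℝ)) : Set ℝ :=
  { r : ℝ | ∃ j ∈ F, ∃ A : (Finset X → ℝ) → Finset X,
    r = j ((F.erase j).biUnion A) - ∑ i ∈ F.erase j, i (A i) }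

lemma hatδ_def (K : Finset (Finset X → ℝ)) :
    hatδ K = if K.card ≤ 1 then 0 else sSup (HatSet K) := rfl

lemma adm_biUnion_le {j : Finset X → ℝ} (hj : IsAdmissible D j)
    (s : Finset (Finset X → ℝ)) (A : (Finset X → ℝ) → Finset X) :
    j (s.biUnion A) ≤ ∑ i ∈ s, j (A i) := by
  classical
  induction s using Finset.induction_on with
  | empty => simp [hj.empty]
  | insert _ _ hnotmem ih =>
      rename_i a s
      rw [Finset.biUnion_insert, Finset.sum_insert hnotmem]
      have := hj.subadd (A a) (s.biUnion A)
      linarith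

lemma adm_pair_bound {f g : Finset X → ℝ} (hf : IsAdmissible D f) (hg : IsAdmissible D g)
    (x : X) (A : Finset X) : f A ≤ g A + f {x} + g {x} := by
  have h1 := hf.tri ∅ A {x} (Finset.singleton_nonempty x)
  simp only [Finset.empty_union] at h1
  have h2 := hg.le (A ∪ {x})
  have h3 := hg.subadd A {x}
  linarith

lemma bddAbove_SSet (x : X) {K : Finset (Finset X → ℝ)}
    (hK : ∀ f ∈ K, IsAdmissible D f) : BddAbove (HatSet K) := by
  classical
  refine ⟨(K.card : ℝ) * (2 * ∑ g ∈ K, g {x}), ?_⟩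
  rintro r ⟨j, hj, A, rfl⟩
  set M := ∑ g ∈ K, g {x} with hM
  have hMnn : ∀ f ∈ K, 0 ≤ f {x} := fun f hf => le_trans (D.nonneg _) ((hK f hf).le _)
  have hle : ∀ f ∈ K, f {x} ≤ M := fun f hf => Finset.single_le_sum hMnn hf
  have hM0 : 0 ≤ M := Finset.sum_nonneg hMnn
  have hjadm := hK j hj
  have h1 : j ((K.erase j).biUnion A) ≤ ∑ i ∈ K.erase j, j (A i) :=
    adm_biUnion_le hjadm _ _
  have h2 : ∑ i ∈ K.erase j, (j (A i) - i (A i)) ≤ (K.erase j).card • (2 * M) := by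
    refine Finset.sum_le_card_nsmul _ _ _ ?_
    intro i hi
    have hiK := Finset.mem_of_mem_erase hi
    have hb := adm_pair_bound hjadm (hK i hiK) x (A i)
    have := hle j hj
    have := hle i hiK
    linarith
  rw [nsmul_eq_mul] at h2
  have hcard : ((K.erase j).card : ℝ) ≤ (K.card : ℝ) := by
    exact_mod_cast Finset.card_le_card (Finset.erase_subset _ _)
  have h3 : ((K.erase j).card : ℝ) * (2 * M) ≤ (K.card : ℝ) * (2 * M) := by
    apply mul_le_mul_of_nonneg_right hcard; linarith
  have h4 : ∑ i ∈ K.erase j, (j (A i) - i (A i))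
      = ∑ i ∈ K.erase j, j (A i) - ∑ i ∈ K.erase j, i (A i) := Finset.sum_sub_distrib _ _
  linarith

lemma zero_mem_SSet {K : Finset (Finset X → ℝ)} (hK : ∀ f ∈ K, IsAdmissible D f)
    (hne : K.Nonempty) : (0 : ℝ) ∈ HatSet K := by
  classical
  obtain ⟨j, hj⟩ := hne
  refine ⟨j, hj, fun _ => ∅, ?_⟩
  have h1 : (K.erase j).biUnion (fun _ => (∅ : Finset X)) = ∅ := by
    ext x; simp
  rw [h1, (hK j hj).empty,
    Finset.sum_congr rfl (fun i hi => (hK i (Finset.mem_of_mem_erase hi)).empty)]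
  simp

lemma nonempty_of_ne {f g : Finset X → ℝ} (hf : IsAdmissible D f) (hg : IsAdmissible D g)
    (h : f ≠ g) : Nonempty X := by
  have hex : ∃ A, f A ≠ g A := by
    by_contra hc; push_neg at hc; exact h (funext hc)
  obtain ⟨A, hA⟩ := hex
  rcases A.eq_empty_or_nonempty with rfl | ⟨x, _⟩
  · exact absurd (hf.empty.trans hg.empty.symm) hA
  · exact ⟨x⟩

lemma diff_mem_SSet {K : Finset (Finset X → ℝ)} (hK : ∀ f ∈ K, IsAdmissible D f)
    {f g : Finset X → ℝ} (hf : f ∈ K) (hg : g ∈ K) (hfg : f ≠ g) (A : Finset X) :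
    f A - g A ∈ HatSet K := by
  classical
  refine ⟨f, hf, fun i => if i = g then A else ∅, ?_⟩
  have hgmem : g ∈ K.erase f := Finset.mem_erase.2 ⟨Ne.symm hfg, hg⟩
  have hU : (K.erase f).biUnion (fun i => if i = g then A else ∅) = A := by
    ext x
    simp only [Finset.mem_biUnion]
    constructor
    · rintro ⟨i, hi, hx⟩
      by_cases h : i = g
      · rwa [if_pos h] at hx
      · rw [if_neg h] at hx; exact absurd hx (Finset.notMem_empty x)
    · intro hx; exact ⟨g, hgmem, by simp [hx]⟩
  have hsum : ∑ i ∈ K.erase f, i (if i = g then A else ∅) = g A := by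
    rw [Finset.sum_eq_single_of_mem g hgmem]
    · simp
    · intro i hi hig
      rw [if_neg hig, (hK i (Finset.mem_of_mem_erase hi)).empty]
  rw [hU, hsum]

lemma SSet_singleton_subset {j : Finset X → ℝ} (hj : IsAdmissible D j) :
    HatSet ({j} : Finset (Finset X → ℝ)) ⊆ {0} := by
  rintro r ⟨j', hj', A, rfl⟩
  rw [Finset.mem_singleton] at hj'
  subst hj'
  simp [Finset.erase_singleton, hj.empty]

lemma hatδ_eq_sSup {K : Finset (Finset X → ℝ)} (hK : ∀ f ∈ K, IsAdmissible D f)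
    (hne : K.Nonempty) : hatδ K = sSup (HatSet K) := by
  rw [hatδ_def]
  split_ifs with h
  · have hc : K.card = 1 := le_antisymm h (Finset.card_pos.2 hne)
    obtain ⟨j, rfl⟩ := Finset.card_eq_one.1 hc
    have hjadm := hK j (Finset.mem_singleton_self j)
    have h0 : HatSet ({j} : Finset (Finset X → ℝ)) = {0} := by
      refine subset_antisymm (SSet_singleton_subset hjadm) ?_
      rintro r hr
      rw [Set.mem_singleton_iff] at hr; subst hr
      exact zero_mem_SSet hK ⟨j, Finset.mem_singleton_self j⟩
    rw [h0, csSup_singleton]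
  · rfl

lemma hatδ_nonneg {K : Finset (Finset X → ℝ)} (hK : ∀ f ∈ K, IsAdmissible D f) :
    0 ≤ hatδ K := by
  rw [hatδ_def]
  split_ifs with h
  · exact le_refl 0
  · push_neg at h
    obtain ⟨f, hf, g, hg, hfg⟩ := Finset.one_lt_card.1 h
    obtain ⟨x⟩ := nonempty_of_ne (hK f hf) (hK g hg) hfg
    exact le_csSup (bddAbove_SSet x hK) (zero_mem_SSet hK ⟨f, hf⟩)

lemma hatδ_eq_zero_iff {K : Finset (Finset X → ℝ)} (hK : ∀ f ∈ K, IsAdmissible D f) :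
    hatδ K = 0 ↔ K.card ≤ 1 := by
  constructor
  · intro h
    by_contra hc
    push_neg at hc
    obtain ⟨f, hf, g, hg, hfg⟩ := Finset.one_lt_card.1 hc
    obtain ⟨x⟩ := nonempty_of_ne (hK f hf) (hK g hg) hfg
    have hAex : ∃ A, f A ≠ g A := by
      by_contra hc2; push_neg at hc2; exact hfg (funext hc2)
    obtain ⟨A, hA⟩ := hAex
    have hbdd := bddAbove_SSet x hK
    have hsup : hatδ K = sSup (HatSet K) := hatδ_eq_sSup hK ⟨f, hf⟩
    rcases lt_or_gt_of_ne hA with hlt | hgt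
    · have hmem := diff_mem_SSet hK hg hf (Ne.symm hfg) A
      have := le_csSup hbdd hmem
      rw [← hsup, h] at this
      linarith
    · have hmem := diff_mem_SSet hK hf hg hfg A
      have := le_csSup hbdd hmem
      rw [← hsup, h] at this
      linarith
  · intro h
    rw [hatδ_def, if_pos h]

lemma restrict_calc {K : Finset (Finset X → ℝ)} (hK : ∀ f ∈ K, IsAdmissible D f)
    (s : Finset (Finset X → ℝ)) (hs : s ⊆ K) (A : (Finset X → ℝ) → Finset X) :
    K.biUnion (fun i => if i ∈ s then A i else ∅) = s.biUnion A ∧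
    ∑ i ∈ K, i (if i ∈ s then A i else ∅) = ∑ i ∈ s, i (A i) := by
  classical
  constructor
  · ext x
    simp only [Finset.mem_biUnion]
    constructor
    · rintro ⟨i, hi, hx⟩
      by_cases h : i ∈ s
      · rw [if_pos h] at hx; exact ⟨i, h, hx⟩
      · rw [if_neg h] at hx; exact absurd hx (Finset.notMem_empty x)
    · rintro ⟨i, hi, hx⟩
      exact ⟨i, hs hi, by rw [if_pos hi]; exact hx⟩
  · have h1 : ∑ i ∈ s, i (if i ∈ s then A i else ∅) = ∑ i ∈ K, i (if i ∈ s then A i else ∅) :=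
      Finset.sum_subset hs (fun i hi his => by rw [if_neg his, (hK i hi).empty])
    rw [← h1]
    exact Finset.sum_congr rfl fun i hi => by rw [if_pos hi]

lemma restrict_calc₂ {K : Finset (Finset X → ℝ)} (hK : ∀ f ∈ K, IsAdmissible D f)
    (s : Finset (Finset X → ℝ)) (hs : s ⊆ K) {g : Finset X → ℝ} (hg : g ∈ K) (hgs : g ∉ s)
    (A : (Finset X → ℝ) → Finset X) (Cg : Finset X) :
    K.biUnion (fun i => if i = g then Cg else if i ∈ s then A i else ∅) = Cg ∪ s.biUnion A ∧
    ∑ i ∈ K, i (if i = g then Cg else if i ∈ s then A i else ∅)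
      = g Cg + ∑ i ∈ s, i (A i) := by
  classical
  have hins : insert g s ⊆ K := Finset.insert_subset hg hs
  constructor
  · ext x
    simp only [Finset.mem_biUnion, Finset.mem_union]
    constructor
    · rintro ⟨i, hi, hx⟩
      by_cases h : i = g
      · rw [if_pos h] at hx; exact Or.inl hx
      · rw [if_neg h] at hx
        by_cases h2 : i ∈ s
        · rw [if_pos h2] at hx; exact Or.inr ⟨i, h2, hx⟩
        · rw [if_neg h2] at hx; exact absurd hx (Finset.notMem_empty x)
    · rintro (hx | ⟨i, hi, hx⟩)
      · exact ⟨g, hg, by rw [if_pos rfl]; exact hx⟩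
      · refine ⟨i, hs hi, ?_⟩
        rw [if_neg (fun h => hgs (by rw [← h]; exact hi)), if_pos hi]
        exact hx
  · have h1 : ∑ i ∈ insert g s, i (if i = g then Cg else if i ∈ s then A i else ∅)
        = ∑ i ∈ K, i (if i = g then Cg else if i ∈ s then A i else ∅) := by
      refine Finset.sum_subset hins (fun i hi his => ?_)
      simp only [Finset.mem_insert, not_or] at his
      rw [if_neg his.1, if_neg his.2, (hK i hi).empty]
    rw [← h1, Finset.sum_insert hgs, if_pos rfl]
    congr 1
    refine Finset.sum_congr rfl fun i hi => ?_
    rw [if_neg (fun h => hgs (by rw [← h]; exact hi)), if_pos hi]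

set_option maxHeartbeats 1000000 in
lemma helper {F G H : Finset (Finset X → ℝ)}
    (hFG : ∀ f ∈ F ∪ G, IsAdmissible D f) (hGH : ∀ f ∈ G ∪ H, IsAdmissible D f)
    (hGne : G.Nonempty) {j : Finset X → ℝ} (hjF : j ∈ F)
    (A : (Finset X → ℝ) → Finset X) :
    ∃ v₁ ∈ HatSet (F ∪ G), ∃ v₂ ∈ HatSet (G ∪ H),
      j (((F ∪ H).erase j).biUnion A) - ∑ i ∈ (F ∪ H).erase j, i (A i) ≤ v₁ + v₂ := by
  classical
  have hjadm : IsAdmissible D j := hFG j (Finset.mem_union_left _ hjF)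
  set TF := F.erase j with hTF
  set TH := H \ F with hTH
  have hT : (F ∪ H).erase j = TF ∪ TH := by
    ext i
    simp only [hTF, hTH, Finset.mem_erase, Finset.mem_union, Finset.mem_sdiff]
    constructor
    · rintro ⟨hne, hFH⟩
      by_cases hiF : i ∈ F
      · exact Or.inl ⟨hne, hiF⟩
      · exact Or.inr ⟨hFH.resolve_left hiF, hiF⟩
    · rintro (⟨hne, hiF⟩ | ⟨hiH, hiF⟩)
      · exact ⟨hne, Or.inl hiF⟩
      · exact ⟨fun h => hiF (by rw [h]; exact hjF), Or.inr hiH⟩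
  have hdisj : Disjoint TF TH :=
    Finset.disjoint_left.2 fun i hi hih => (Finset.mem_sdiff.1 hih).2 (Finset.mem_of_mem_erase hi)
  set W := TF.biUnion A with hW
  set B := TH.biUnion A with hB
  have hU : ((F ∪ H).erase j).biUnion A = W ∪ B := by
    rw [hT, hW, hB]
    ext x
    simp only [Finset.mem_biUnion, Finset.mem_union]
    constructor
    · rintro ⟨i, hi | hi, hx⟩
      · exact Or.inl ⟨i, hi, hx⟩
      · exact Or.inr ⟨i, hi, hx⟩
    · rintro (⟨i, hi, hx⟩ | ⟨i, hi, hx⟩)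
      · exact ⟨i, Or.inl hi, hx⟩
      · exact ⟨i, Or.inr hi, hx⟩
  have hSum : ∑ i ∈ (F ∪ H).erase j, i (A i)
      = ∑ i ∈ TF, i (A i) + ∑ i ∈ TH, i (A i) := by rw [hT, Finset.sum_union hdisj]
  have hTFsub : TF ⊆ (F ∪ G).erase j := Finset.erase_subset_erase j Finset.subset_union_left
  have hFGadm : ∀ f ∈ (F ∪ G).erase j, IsAdmissible D f :=
    fun f hf => hFG f (Finset.mem_of_mem_erase hf)
  by_cases hjG : j ∈ G
  · -- use g := j
    have hTHsub : TH ⊆ (G ∪ H).erase j := fun i hi =>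
      Finset.mem_erase.2 ⟨fun h => (Finset.mem_sdiff.1 hi).2 (by rw [h]; exact hjF),
        Finset.mem_union_right _ (Finset.mem_sdiff.1 hi).1⟩
    have hGHadm : ∀ f ∈ (G ∪ H).erase j, IsAdmissible D f :=
      fun f hf => hGH f (Finset.mem_of_mem_erase hf)
    obtain ⟨hU1, hS1⟩ := restrict_calc hFGadm TF hTFsub A
    obtain ⟨hU2, hS2⟩ := restrict_calc hGHadm TH hTHsub A
    refine ⟨j W - ∑ i ∈ TF, i (A i),
      ⟨j, Finset.mem_union_left _ hjF, fun i => if i ∈ TF then A i else ∅, by rw [hU1, hS1]⟩,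
      j B - ∑ i ∈ TH, i (A i),
      ⟨j, Finset.mem_union_left _ hjG, fun i => if i ∈ TH then A i else ∅, by rw [hU2, hS2]⟩, ?_⟩
    rw [hU, hSum]
    have := hjadm.subadd W B
    linarith
  · obtain ⟨g, hgG⟩ := hGne
    have hgj : g ≠ j := fun h => hjG (h ▸ hgG)
    have hgadm : IsAdmissible D g := hFG g (Finset.mem_union_right _ hgG)
    set V₂ := (TH.erase g).biUnion A with hV₂
    set Ag' := (if g ∈ TF then A g else ∅) with hAg'
    -- v₁ membership data
    have hgmem1 : g ∈ (F ∪ G).erase j :=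
      Finset.mem_erase.2 ⟨hgj, Finset.mem_union_right _ hgG⟩
    have hs1 : TF.erase g ⊆ (F ∪ G).erase j := (Finset.erase_subset g TF).trans hTFsub
    obtain ⟨hU1, hS1⟩ := restrict_calc₂ hFGadm (TF.erase g) hs1 hgmem1
      (Finset.notMem_erase g TF) A (Ag' ∪ B)
    -- v₂ membership data
    have hGHadm : ∀ f ∈ (G ∪ H).erase g, IsAdmissible D f :=
      fun f hf => hGH f (Finset.mem_of_mem_erase hf)
    have hs2 : TH.erase g ⊆ (G ∪ H).erase g := fun i hi => by
      rw [Finset.mem_erase] at hi ⊢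
      exact ⟨hi.1, Finset.mem_union_right _ (Finset.mem_sdiff.1 hi.2).1⟩
    obtain ⟨hU2, hS2⟩ := restrict_calc hGHadm (TH.erase g) hs2 A
    -- decomposition of W
    have hWdec : W = Ag' ∪ (TF.erase g).biUnion A := by
      by_cases h : g ∈ TF
      · rw [hAg', if_pos h, hW]
        conv_lhs => rw [← Finset.insert_erase h]
        rw [Finset.biUnion_insert]
      · rw [hAg', if_neg h, Finset.empty_union, hW, Finset.erase_eq_of_notMem h]
    have hU1' : ((F ∪ G).erase j).biUnion
        (fun i => if i = g then Ag' ∪ B else if i ∈ TF.erase g then A i else ∅) = W ∪ B := by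
      rw [hU1, hWdec]
      ext x
      simp only [Finset.mem_union]
      tauto
    -- decomposition of B
    have hBdec : B = (if g ∈ TH then A g else ∅) ∪ V₂ := by
      by_cases h : g ∈ TH
      · rw [if_pos h, hB, hV₂]
        conv_lhs => rw [← Finset.insert_erase h]
        rw [Finset.biUnion_insert]
      · rw [if_neg h, Finset.empty_union, hV₂, Finset.erase_eq_of_notMem h, hB]
    -- sum splittings
    have hsF : ∑ i ∈ TF, i (A i)
        = ∑ i ∈ TF.erase g, i (A i) + (if g ∈ TF then g (A g) else 0) := by
      split_ifs with h
      · exact (Finset.sum_erase_add TF _ h).symm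
      · rw [Finset.erase_eq_of_notMem h, add_zero]
    have hsH : ∑ i ∈ TH, i (A i)
        = ∑ i ∈ TH.erase g, i (A i) + (if g ∈ TH then g (A g) else 0) := by
      split_ifs with h
      · exact (Finset.sum_erase_add TH _ h).symm
      · rw [Finset.erase_eq_of_notMem h, add_zero]
    -- key inequality
    have key : g (Ag' ∪ B)
        ≤ (if g ∈ TF then g (A g) else 0) + (if g ∈ TH then g (A g) else 0) + g V₂ := by
      by_cases h1 : g ∈ TF
      · have h2 : g ∉ TH := fun h => (Finset.disjoint_left.1 hdisj h1) h
        rw [if_pos h1, if_neg h2]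
        have hB' : B = V₂ := by rw [hBdec, if_neg h2, Finset.empty_union]
        rw [hAg', if_pos h1, hB']
        have := hgadm.subadd (A g) V₂
        linarith
      · rw [if_neg h1, hAg', if_neg h1, Finset.empty_union]
        by_cases h2 : g ∈ TH
        · rw [if_pos h2]
          rw [hBdec, if_pos h2]
          have := hgadm.subadd (A g) V₂
          linarith
        · rw [if_neg h2]
          have hB' : B = V₂ := by rw [hBdec, if_neg h2, Finset.empty_union]
          rw [hB']
          linarith [hgadm.le V₂, D.nonneg V₂]
    refine ⟨j (W ∪ B) - (g (Ag' ∪ B) + ∑ i ∈ TF.erase g, i (A i)),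
      ⟨j, Finset.mem_union_left _ hjF,
        fun i => if i = g then Ag' ∪ B else if i ∈ TF.erase g then A i else ∅,
        by rw [hU1', hS1]⟩,
      g V₂ - ∑ i ∈ TH.erase g, i (A i),
      ⟨g, Finset.mem_union_left _ hgG, fun i => if i ∈ TH.erase g then A i else ∅,
        by rw [hU2, hS2]⟩, ?_⟩
    rw [hU, hSum, hsF, hsH]
    linarith

lemma hatδ_triangle {F G H : Finset (Finset X → ℝ)}
    (hF : ∀ f ∈ F, IsAdmissible D f) (hG : ∀ f ∈ G, IsAdmissible D f)
    (hH : ∀ f ∈ H, IsAdmissible D f) (hGne : G.Nonempty) :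
    hatδ (F ∪ H) ≤ hatδ (F ∪ G) + hatδ (G ∪ H) := by
  classical
  have hFG : ∀ f ∈ F ∪ G, IsAdmissible D f := fun f hf =>
    (Finset.mem_union.1 hf).elim (hF f) (hG f)
  have hGH : ∀ f ∈ G ∪ H, IsAdmissible D f := fun f hf =>
    (Finset.mem_union.1 hf).elim (hG f) (hH f)
  have hFH : ∀ f ∈ F ∪ H, IsAdmissible D f := fun f hf =>
    (Finset.mem_union.1 hf).elim (hF f) (hH f)
  have hHG : ∀ f ∈ H ∪ G, IsAdmissible D f := fun f hf =>
    (Finset.mem_union.1 hf).elim (hH f) (hG f)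
  have hGF : ∀ f ∈ G ∪ F, IsAdmissible D f := fun f hf =>
    (Finset.mem_union.1 hf).elim (hG f) (hF f)
  by_cases h1 : (F ∪ H).card ≤ 1
  · rw [hatδ_def, if_pos h1]
    have n1 := hatδ_nonneg hFG
    have n2 := hatδ_nonneg hGH
    linarith
  · have h1' : 1 < (F ∪ H).card := not_le.1 h1
    obtain ⟨f, hf, g, hg, hfg⟩ := Finset.one_lt_card.1 h1'
    obtain ⟨x⟩ := nonempty_of_ne (hFH f hf) (hFH g hg) hfg
    have bFG := bddAbove_SSet x hFG
    have bGH := bddAbove_SSet x hGH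
    have hFGne : (F ∪ G).Nonempty := hGne.mono Finset.subset_union_right
    have hGHne : (G ∪ H).Nonempty := hGne.mono Finset.subset_union_left
    rw [hatδ_def, if_neg h1, hatδ_eq_sSup hFG hFGne, hatδ_eq_sSup hGH hGHne]
    refine csSup_le ⟨0, zero_mem_SSet hFH ⟨f, hf⟩⟩ ?_
    rintro r ⟨j, hj, A, rfl⟩
    rcases Finset.mem_union.1 hj with hjF | hjH
    · obtain ⟨v₁, h₁, v₂, h₂, hle⟩ := helper hFG hGH hGne hjF A
      have l1 := le_csSup bFG h₁
      have l2 := le_csSup bGH h₂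
      linarith
    · obtain ⟨v₁, h₁, v₂, h₂, hle⟩ := helper hHG hGF hGne hjH A
      rw [Finset.union_comm H F] at hle
      rw [Finset.union_comm H G] at h₁
      rw [Finset.union_comm G F] at h₂
      have l1 := le_csSup bGH h₁
      have l2 := le_csSup bFG h₂
      linarith

end HatDiv

/-- `(E(X), δ̂)` is a diversity. -/
theorem stmt2 {X : Type*} (D : Diversity X) :
    ∃ E : Diversity {f : Finset X → ℝ // IsAdmissible D f},
      ∀ F : Finset {f : Finset X → ℝ // IsAdmissible D f},
        E.δ F = hatδ (F.image Subtype.val) := by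
  classical
  have hadm : ∀ F : Finset {f : Finset X → ℝ // IsAdmissible D f},
      ∀ f ∈ F.image Subtype.val, IsAdmissible D f := by
    intro F f hf
    obtain ⟨a, _, rfl⟩ := Finset.mem_image.1 hf
    exact a.2
  refine ⟨⟨fun F => hatδ (F.image Subtype.val), ?_, ?_, ?_⟩, fun F => rfl⟩
  · intro A
    exact hatδ_nonneg (hadm A)
  · intro A
    rw [hatδ_eq_zero_iff (hadm A),
      Finset.card_image_of_injective _ Subtype.val_injective]
  · intro A B C hB
    have h1 : (A ∪ C).image Subtype.val = A.image Subtype.val ∪ C.image Subtype.val :=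
      Finset.image_union _ _
    have h2 : (A ∪ B).image Subtype.val = A.image Subtype.val ∪ B.image Subtype.val :=
      Finset.image_union _ _
    have h3 : (B ∪ C).image Subtype.val = B.image Subtype.val ∪ C.image Subtype.val :=
      Finset.image_union _ _
    simp only [Finset.image_union]
    exact hatδ_triangle (hadm A) (hadm B) (hadm C) (hB.image _)
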